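/- Let h_t(z) = (z + ζ(t))/(1 + conj(ζ(t))·z) where ζ(t), ζ(s) lie in the open unit disc, and let b lie on the unit circle. Then |h_t(b) - h_s(b)| ≤ 2·(|ζ(t)-ζ(s)| + |Im(ζ(t)·conj(ζ(s)))|) / ((1-|ζ(t)|)(1-|ζ(s)|)) ≤ 4|ζ(t)-ζ(s)| / ((1-|ζ(t)|)(1-|ζ(s)|)). -/

import Mathlib

open Complex
open scoped ComplexConjugate

theorem stmt_6 (ζt ζs : ℂ) (hζt : ‖ζt‖ < 1) (hζs : ‖ζs‖ < 1)
    (b : ℂ) (hb : ‖b‖ = 1) :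
    ‖(b + ζt) / (1 + conj ζt * b) - (b + ζs) / (1 + conj ζs * b)‖ ≤
        2 * (‖ζt - ζs‖ + |(ζt * conj ζs).im|) /
          ((1 - ‖ζt‖) * (1 - ‖ζs‖)) ∧
      2 * (‖ζt - ζs‖ + |(ζt * conj ζs).im|) /
          ((1 - ‖ζt‖) * (1 - ‖ζs‖)) ≤
        4 * ‖ζt - ζs‖ / ((1 - ‖ζt‖) * (1 - ‖ζs‖)) := by
  have hdt : (0:ℝ) < 1 - ‖ζt‖ := by linarith
  have hds : (0:ℝ) < 1 - ‖ζs‖ := by linarith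
  have hd : (0:ℝ) < (1 - ‖ζt‖) * (1 - ‖ζs‖) := mul_pos hdt hds
  set A := 1 + conj ζt * b with hAdef
  set B := 1 + conj ζs * b with hBdef
  have habs_t : ‖conj ζt * b‖ = ‖ζt‖ := by
    rw [norm_mul, Complex.norm_conj, hb, mul_one]
  have habs_s : ‖conj ζs * b‖ = ‖ζs‖ := by
    rw [norm_mul, Complex.norm_conj, hb, mul_one]
  have hA_lb : 1 - ‖ζt‖ ≤ ‖A‖ := by
    have h := norm_add_le A (-(conj ζt * b))
    have he : A + -(conj ζt * b) = 1 := by rw [hAdef]; ring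
    rw [he, norm_neg, habs_t] at h
    simp at h
    linarith
  have hB_lb : 1 - ‖ζs‖ ≤ ‖B‖ := by
    have h := norm_add_le B (-(conj ζs * b))
    have he : B + -(conj ζs * b) = 1 := by rw [hBdef]; ring
    rw [he, norm_neg, habs_s] at h
    simp at h
    linarith
  have hA0 : A ≠ 0 := by
    intro h
    rw [h] at hA_lb
    simp at hA_lb
    linarith
  have hB0 : B ≠ 0 := by
    intro h
    rw [h] at hB_lb
    simp at hB_lb
    linarith
  constructor
  · rw [div_sub_div _ _ hA0 hB0]
    have hnum : (b + ζt) * B - (b + ζs) * A =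
        b ^ 2 * (conj ζs - conj ζt) + (ζt - ζs)
          + b * (ζt * conj ζs - conj (ζt * conj ζs)) := by
      rw [hAdef, hBdef]
      have : conj (ζt * conj ζs) = conj ζt * ζs := by
        rw [map_mul, Complex.conj_conj]
      rw [this]; ring
    have hnum_bound : ‖(b + ζt) * B - (b + ζs) * A‖ ≤
        2 * (‖ζt - ζs‖ + |(ζt * conj ζs).im|) := by
      rw [hnum]
      have h1 : ‖b ^ 2 * (conj ζs - conj ζt)‖ = ‖ζt - ζs‖ := by
        rw [norm_mul, norm_pow, hb, one_pow, one_mul, ← map_sub (starRingEnd ℂ),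
          Complex.norm_conj]
        exact norm_sub_rev ζs ζt
      have h2 : ‖b * (ζt * conj ζs - conj (ζt * conj ζs))‖ =
          2 * |(ζt * conj ζs).im| := by
        rw [norm_mul, hb, one_mul, Complex.sub_conj, norm_mul, Complex.norm_I,
          mul_one, Complex.norm_real, Real.norm_eq_abs, abs_mul]
        norm_num
      calc ‖_‖ ≤ ‖b ^ 2 * (conj ζs - conj ζt) + (ζt - ζs)‖
            + ‖b * (ζt * conj ζs - conj (ζt * conj ζs))‖ :=
            norm_add_le _ _
        _ ≤ ‖b ^ 2 * (conj ζs - conj ζt)‖ + ‖ζt - ζs‖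
            + ‖b * (ζt * conj ζs - conj (ζt * conj ζs))‖ := by
            gcongr; exact norm_add_le _ _
        _ = 2 * (‖ζt - ζs‖ + |(ζt * conj ζs).im|) := by
            rw [h1, h2]; ring
    rw [norm_div, norm_mul,
      show (b + ζt) * B - A * (b + ζs) = (b + ζt) * B - (b + ζs) * A from by ring]
    apply div_le_div₀ (by positivity) hnum_bound hd
    exact mul_le_mul hA_lb hB_lb hds.le (norm_nonneg _)
  · apply (div_le_div_iff_of_pos_right hd).mpr
    have him : |(ζt * conj ζs).im| ≤ ‖ζt - ζs‖ := by
      have h1 : (ζt * conj ζs).im = ((ζt - ζs) * conj ζs).im := by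
        have : (ζs * conj ζs).im = 0 := by
          rw [Complex.mul_conj]; simp
        simp [sub_mul, this]
      rw [h1]
      calc |((ζt - ζs) * conj ζs).im| ≤ ‖(ζt - ζs) * conj ζs‖ :=
            Complex.abs_im_le_norm _
        _ = ‖ζt - ζs‖ * ‖ζs‖ := by
            rw [norm_mul, Complex.norm_conj]
        _ ≤ ‖ζt - ζs‖ * 1 :=
            mul_le_mul_of_nonneg_left hζs.le (norm_nonneg _)
        _ = ‖ζt - ζs‖ := mul_one _
    linarith
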